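/- For a graded poset P, the ab-index equals the sum over all chains c = {\hat{0} = x_0 < x_1 < ... < x_k = \hat{1}} of the weight wt(c) = (a-b)^{\rho(x_0,x_1)-1} b (a-b)^{\rho(x_1,x_2)-1} b ... b (a-b)^{\rho(x_{k-1},x_k)-1}. -/

import Mathlib

open Finset

/-- The ring `ℤ⟨a,b⟩` of noncommutative polynomials in the variables `a` and `b`,
realized as the monoid algebra of the free monoid on two letters
(`false` encodes the letter `a` and `true` the letter `b`). -/
abbrev AB : Type := MonoidAlgebra ℤ (FreeMonoid Bool)

/-- The variable `a`. -/
noncomputable def aV : AB := MonoidAlgebra.single (FreeMonoid.ofList [false]) 1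

/-- The variable `b`. -/
noncomputable def bV : AB := MonoidAlgebra.single (FreeMonoid.ofList [true]) 1

/-- The `ab`-monomial `u_S` of degree `n`, with `b` in the positions of `S`. -/
def word (n : ℕ) (S : Finset ℕ) : FreeMonoid Bool :=
  FreeMonoid.ofList (List.ofFn fun i : Fin n => decide ((i : ℕ) + 1 ∈ S))

/-- The flag `f`-vector entry `f_S`. -/
noncomputable def flagF (P : Type*) [PartialOrder P] (ρ : P → ℕ) (S : Finset ℕ) : ℤ :=
  ({c : Finset P | IsChain (· ≤ ·) (↑c : Set P) ∧ c.image ρ = S} : Set (Finset P)).ncard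

/-- The flag `h`-vector entry `h_S`. -/
noncomputable def flagH (P : Type*) [PartialOrder P] (ρ : P → ℕ) (S : Finset ℕ) : ℤ :=
  ∑ T ∈ S.powerset, (-1) ^ (S.card - T.card) * flagF P ρ T

/-- The `ab`-index `Ψ(P) = ∑_S h_S u_S` of a poset `P` of rank `n+1` with rank
function `ρ` (the elements of ranks `1,…,n` are the proper part of `P`). -/
noncomputable def Psi (P : Type*) [PartialOrder P] (ρ : P → ℕ) (n : ℕ) : AB :=
  ∑ S ∈ (Finset.Icc 1 n).powerset, MonoidAlgebra.single (word n S) (flagH P ρ S)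

open scoped Classical

/-- Helper for the weight of a chain: given the previous rank `r` and the list of
remaining ranks, produce `b (a-b)^{g_1} b (a-b)^{g_2} ⋯`. -/
noncomputable def wtFrom (r : ℕ) : List ℕ → AB
  | [] => 1
  | s :: t => bV * (aV - bV) ^ (s - r - 1) * wtFrom s t

/-- The weight `wt(c) = (a-b)^{ρ(x_0,x_1)-1} b (a-b)^{ρ(x_1,x_2)-1} b ⋯ b (a-b)^{ρ(x_{k-1},x_k)-1}`
of a chain, given its list of ranks. -/
noncomputable def wt : List ℕ → AB
  | [] => 1
  | [_] => 1
  | r :: s :: t => (aV - bV) ^ (s - r - 1) * wtFrom s t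



/-! word lemmas -/

lemma word_congr {n : ℕ} {S S' : Finset ℕ}
    (h : ∀ i, 1 ≤ i → i ≤ n → (i ∈ S ↔ i ∈ S')) : word n S = word n S' := by
  unfold word
  congr 1
  apply congrArg
  funext i
  have := h (i+1) (by omega) (by omega)
  simp [this]

lemma word_succ (n : ℕ) (S : Finset ℕ) :
    word (n+1) S = word n S * FreeMonoid.ofList [decide ((n+1) ∈ S)] := by
  unfold word
  rw [List.ofFn_succ']
  simp only [Fin.coe_castSucc, Fin.val_last, List.concat_eq_append]
  rfl

lemma single_mul_word (w : FreeMonoid Bool) (z : ℤ) (x : Bool) :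
    (MonoidAlgebra.single w z : AB) * MonoidAlgebra.single (FreeMonoid.ofList [x]) 1
      = MonoidAlgebra.single (w * FreeMonoid.ofList [x]) z := by
  rw [MonoidAlgebra.single_mul_single, mul_one]

/-! segment products -/

noncomputable def seg (l m : ℕ) (T : Finset ℕ) : AB :=
  ((List.range' l m).map (fun i => if i ∈ T then bV else aV - bV)).prod

@[simp] lemma seg_zero (l : ℕ) (T : Finset ℕ) : seg l 0 T = 1 := rfl

lemma seg_one (l : ℕ) (T : Finset ℕ) :
    seg l 1 T = if l ∈ T then bV else aV - bV := by
  simp [seg]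

lemma seg_add (l m₁ m₂ : ℕ) (T : Finset ℕ) :
    seg l (m₁ + m₂) T = seg l m₁ T * seg (l + m₁) m₂ T := by
  rw [seg, ← List.range'_append_1, List.map_append,
    List.prod_append]; rfl

lemma seg_const (l m : ℕ) (T : Finset ℕ) (h : ∀ i, l ≤ i → i < l + m → i ∉ T) :
    seg l m T = (aV - bV) ^ m := by
  induction m generalizing l with
  | zero => simp
  | succ m ih =>
    rw [show m + 1 = 1 + m by omega, seg_add, seg_one,
      if_neg (h l le_rfl (by omega)), ih (l+1) (fun i h1 h2 => h i (by omega) (by omega)),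
      pow_add, pow_one]

lemma seg_congr (l m : ℕ) {T T' : Finset ℕ}
    (h : ∀ i, l ≤ i → i < l + m → (i ∈ T ↔ i ∈ T')) : seg l m T = seg l m T' := by
  unfold seg
  congr 1
  apply List.map_congr_left
  intro i hi
  have hi' := List.mem_range'_1.mp hi
  simp [h i hi'.1 (by omega)]

/-! the expansion `E` of a chain weight as a signed sum of monomials -/

noncomputable def Efn (n : ℕ) (T : Finset ℕ) : AB :=
  ∑ U ∈ (Finset.Icc 1 n \ T).powerset,
    MonoidAlgebra.single (word n (T ∪ U)) ((-1 : ℤ) ^ U.card)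

lemma seg_eq_Efn (n : ℕ) (T : Finset ℕ) (hT : T ⊆ Finset.Icc 1 n) :
    seg 1 n T = Efn n T := by
  induction n generalizing T with
  | zero =>
    have : T = ∅ := by simpa using hT
    subst this
    simp [Efn, word, MonoidAlgebra.one_def]
  | succ n ih =>
    have hsplit : seg 1 (n+1) T = seg 1 n T * (if n+1 ∈ T then bV else aV - bV) := by
      rw [seg_add, show (1:ℕ)+n = n+1 by omega, seg_one]
    by_cases hmem : n + 1 ∈ T
    · rw [hsplit, if_pos hmem]
      set T' := T.erase (n+1) with hT'
      have hT'sub : T' ⊆ Finset.Icc 1 n := by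
        intro x hx
        have h1 := Finset.mem_of_mem_erase hx
        have h2 := Finset.ne_of_mem_erase hx
        have := hT h1
        simp only [Finset.mem_Icc] at this ⊢
        omega
      have hseg : seg 1 n T = seg 1 n T' := by
        apply seg_congr
        intro i h1 h2
        simp only [hT', Finset.mem_erase]
        constructor
        · intro h; exact ⟨by omega, h⟩
        · exact fun h => h.2
      have hD : Finset.Icc 1 (n+1) \ T = Finset.Icc 1 n \ T' := by
        ext x
        simp only [Finset.mem_sdiff, Finset.mem_Icc, hT', Finset.mem_erase]
        constructor
        · intro ⟨h1, h2⟩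
          have hx : x ≠ n+1 := fun h => h2 (h ▸ hmem)
          exact ⟨⟨h1.1, by omega⟩, fun hc => h2 hc.2⟩
        · intro ⟨h1, h2⟩
          refine ⟨⟨h1.1, by omega⟩, fun hx => h2 ⟨by omega, hx⟩⟩
      rw [hseg, ih T' hT'sub, Efn, Efn, hD, Finset.sum_mul]
      apply Finset.sum_congr rfl
      intro U hU
      have hUsub : U ⊆ Finset.Icc 1 n \ T' := Finset.mem_powerset.mp hU
      have hw : word n (T ∪ U) = word n (T' ∪ U) := by
        apply word_congr
        intro i h1 h2
        simp only [Finset.mem_union, hT', Finset.mem_erase]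
        constructor
        · rintro (h | h)
          · exact Or.inl ⟨by omega, h⟩
          · exact Or.inr h
        · rintro (h | h)
          · exact Or.inl h.2
          · exact Or.inr h
      unfold bV
      rw [single_mul_word]
      congr 1
      rw [word_succ, hw]
      congr 2
      simp [hmem]
    · rw [hsplit, if_neg hmem]
      have hTsub : T ⊆ Finset.Icc 1 n := by
        intro x hx
        have := hT hx
        simp only [Finset.mem_Icc] at this ⊢
        have : x ≠ n + 1 := fun h => hmem (h ▸ hx)
        omega
      have hD : Finset.Icc 1 (n+1) \ T = insert (n+1) (Finset.Icc 1 n \ T) := by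
        ext x
        simp only [Finset.mem_sdiff, Finset.mem_Icc, Finset.mem_insert]
        constructor
        · intro ⟨h1, h2⟩
          rcases Nat.lt_or_ge x (n+1) with h | h
          · exact Or.inr ⟨⟨h1.1, by omega⟩, h2⟩
          · exact Or.inl (by omega)
        · rintro (h | ⟨h1, h2⟩)
          · subst h; exact ⟨⟨by omega, le_rfl⟩, hmem⟩
          · exact ⟨⟨h1.1, by omega⟩, h2⟩
      have hnotmem : n + 1 ∉ Finset.Icc 1 n \ T := by simp
      rw [ih T hTsub, Efn, Efn, hD, Finset.sum_powerset_insert hnotmem]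
      have key : ∀ U ∈ (Finset.Icc 1 n \ T).powerset,
          (word (n+1) (T ∪ U) = word n (T ∪ U) * FreeMonoid.ofList [false]) ∧
          (word (n+1) (T ∪ insert (n+1) U) = word n (T ∪ U) * FreeMonoid.ofList [true]) ∧
          (insert (n+1) U).card = U.card + 1 := by
        intro U hU
        have hUsub : U ⊆ Finset.Icc 1 n \ T := Finset.mem_powerset.mp hU
        have hn1U : n + 1 ∉ U := fun h => hnotmem (hUsub h)
        have hn1TU : n + 1 ∉ T ∪ U := by simp [hmem, hn1U]
        refine ⟨?_, ?_, Finset.card_insert_of_notMem hn1U⟩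
        · rw [word_succ]
          congr 2
          simp [hn1TU]
        · have hturn : T ∪ insert (n+1) U = insert (n+1) (T ∪ U) := by
            ext x
            simp only [Finset.mem_union, Finset.mem_insert]
            tauto
          rw [hturn, word_succ]
          have hwc : word n (insert (n+1) (T ∪ U)) = word n (T ∪ U) := by
            apply word_congr
            intro i h1 h2
            simp only [Finset.mem_insert]
            constructor
            · rintro (h | h)
              · omega
              · exact h
            · exact Or.inr
          rw [hwc]
          congr 2
          simp
      have e1 : ∑ U ∈ (Finset.Icc 1 n \ T).powerset,
            MonoidAlgebra.single (word (n+1) (T ∪ U)) ((-1:ℤ) ^ U.card)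
          = ∑ U ∈ (Finset.Icc 1 n \ T).powerset,
            MonoidAlgebra.single (word n (T ∪ U)) ((-1:ℤ) ^ U.card) * aV := by
        apply Finset.sum_congr rfl
        intro U hU
        unfold aV
        rw [single_mul_word, (key U hU).1]
      have e2 : ∑ U ∈ (Finset.Icc 1 n \ T).powerset,
            MonoidAlgebra.single (word (n+1) (T ∪ insert (n+1) U))
              ((-1:ℤ) ^ (insert (n+1) U).card)
          = ∑ U ∈ (Finset.Icc 1 n \ T).powerset,
            -(MonoidAlgebra.single (word n (T ∪ U)) ((-1:ℤ) ^ U.card) * bV) := by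
        apply Finset.sum_congr rfl
        intro U hU
        unfold bV
        rw [single_mul_word, (key U hU).2.1, (key U hU).2.2, pow_succ, mul_neg_one,
          ← MonoidAlgebra.single_neg]
      rw [e1, e2, mul_sub, Finset.sum_mul, Finset.sum_mul, Finset.sum_neg_distrib,
        sub_eq_add_neg]

lemma Efn_eq_filter (n : ℕ) (T : Finset ℕ) (hT : T ⊆ Finset.Icc 1 n) :
    Efn n T = ∑ S ∈ (Finset.Icc 1 n).powerset.filter (T ⊆ ·),
      MonoidAlgebra.single (word n S) ((-1 : ℤ) ^ (S.card - T.card)) := by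
  unfold Efn
  apply Finset.sum_nbij' (fun U => T ∪ U) (fun S => S \ T)
  · intro U hU
    simp only [Finset.mem_powerset] at hU
    simp only [Finset.mem_filter, Finset.mem_powerset]
    exact ⟨Finset.union_subset hT (hU.trans (Finset.sdiff_subset)), Finset.subset_union_left⟩
  · intro S hS
    simp only [Finset.mem_filter, Finset.mem_powerset] at hS
    simp only [Finset.mem_powerset]
    exact Finset.sdiff_subset_sdiff hS.1 le_rfl
  · intro U hU
    simp only [Finset.mem_powerset] at hU
    rw [Finset.union_sdiff_cancel_left]
    exact Finset.disjoint_left.mpr fun x hxT hxU => (Finset.mem_sdiff.mp (hU hxU)).2 hxT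
  · intro S hS
    simp only [Finset.mem_filter, Finset.mem_powerset] at hS
    exact Finset.union_sdiff_of_subset hS.2
  · intro U hU
    simp only [Finset.mem_powerset] at hU
    have hdisj : Disjoint T U :=
      Finset.disjoint_left.mpr fun x hxT hxU => (Finset.mem_sdiff.mp (hU hxU)).2 hxT
    congr 1
    rw [Finset.card_union_of_disjoint hdisj]
    congr 1
    omega

/-! weights as segment products -/

lemma wtFrom_eq (t : List ℕ) : ∀ (r e : ℕ) (T : Finset ℕ),
    (r :: t).Chain' (· < ·) →
    (r :: t).getLast (by simp) = e →
    (∀ i, r ≤ i → i < e → (i ∈ T ↔ i ∈ r :: t)) →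
    wtFrom r t = seg r (e - r) T := by
  induction t with
  | nil =>
    intro r e T _ hlast _
    simp only [List.getLast_singleton] at hlast
    subst hlast
    simp [wtFrom]
  | cons s t' ih =>
    intro r e T hchain hlast hT
    have hrs : r < s := (List.isChain_cons_cons.mp hchain).1
    have hchain' : (s :: t').Chain' (· < ·) := (List.isChain_cons_cons.mp hchain).2
    have hpw : ∀ x ∈ t', s < x :=
      fun x hx => (List.pairwise_cons.mp (List.isChain_iff_pairwise.mp hchain')).1 x hx
    have hlast' : (s :: t').getLast (by simp) = e := by
      rw [← hlast]
      exact (List.getLast_cons (by simp)).symm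
    have hse : s ≤ e := by
      have := List.getLast_mem (l := s :: t') (by simp)
      rw [hlast'] at this
      rcases List.mem_cons.mp this with h | h
      · omega
      · exact le_of_lt (hpw e h)
    have hT' : ∀ i, s ≤ i → i < e → (i ∈ T ↔ i ∈ s :: t') := by
      intro i h1 h2
      rw [hT i (by omega) h2, List.mem_cons, List.mem_cons]
      constructor
      · rintro (h | h)
        · omega
        · exact h
      · exact Or.inr
    have hIH := ih s e T hchain' hlast' hT'
    show bV * (aV - bV) ^ (s - r - 1) * wtFrom s t' = seg r (e - r) T
    rw [hIH, show e - r = 1 + ((s - r - 1) + (e - s)) by omega, seg_add, seg_add, seg_one,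
      if_pos ((hT r le_rfl (by omega)).mpr (by simp)),
      show r + 1 + (s - r - 1) = s by omega,
      seg_const (r+1) (s-r-1) T ?_, mul_assoc]
    intro i h1 h2 hiT
    have h2' : i < s := by omega
    have := (hT i (by omega) (by omega)).mp hiT
    rcases List.mem_cons.mp this with h | h
    · omega
    · rcases List.mem_cons.mp h with h | h
      · omega
      · exact absurd (hpw i h) (by omega)

lemma wt_eq (x y : ℕ) (t : List ℕ) (e : ℕ) (T : Finset ℕ)
    (hchain : (x :: y :: t).Chain' (· < ·))
    (hlast : (x :: y :: t).getLast (by simp) = e)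
    (hT : ∀ i, x + 1 ≤ i → i < e → (i ∈ T ↔ i ∈ x :: y :: t)) :
    wt (x :: y :: t) = seg (x+1) (e - (x+1)) T := by
  have hxy : x < y := (List.isChain_cons_cons.mp hchain).1
  have hchain' : (y :: t).Chain' (· < ·) := (List.isChain_cons_cons.mp hchain).2
  have hpw : ∀ z ∈ t, y < z :=
    fun z hz => (List.pairwise_cons.mp (List.isChain_iff_pairwise.mp hchain')).1 z hz
  have hlast' : (y :: t).getLast (by simp) = e := by
    rw [← hlast]
    exact (List.getLast_cons (by simp)).symm
  have hye : y ≤ e := by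
    have := List.getLast_mem (l := y :: t) (by simp)
    rw [hlast'] at this
    rcases List.mem_cons.mp this with h | h
    · omega
    · exact le_of_lt (hpw e h)
  have hT' : ∀ i, y ≤ i → i < e → (i ∈ T ↔ i ∈ y :: t) := by
    intro i h1 h2
    rw [hT i (by omega) h2, List.mem_cons, List.mem_cons]
    constructor
    · rintro (h | h)
      · omega
      · exact h
    · exact Or.inr
  have hIH := wtFrom_eq t y e T hchain' hlast' hT'
  show (aV - bV) ^ (y - x - 1) * wtFrom y t = seg (x+1) (e - (x+1)) T
  rw [hIH, show e - (x+1) = (y - x - 1) + (e - y) by omega, seg_add,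
    show x + 1 + (y - x - 1) = y by omega, seg_const (x+1) (y-x-1) T ?_]
  intro i h1 h2 hiT
  have h2' : i < y := by omega
  have := (hT i (by omega) (by omega)).mp hiT
  rcases List.mem_cons.mp this with h | h
  · omega
  · rcases List.mem_cons.mp h with h | h
    · omega
    · exact absurd (hpw i h) (by omega)

lemma wt_chain (n : ℕ) (L : List ℕ) (h2 : 2 ≤ L.length) (hchain : L.Chain' (· < ·))
    (hhead : L.head? = some 0) (hlast : L.getLast? = some (n+1)) :
    wt L = Efn n (L.toFinset ∩ Finset.Icc 1 n) := by
  match L, h2 with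
  | x :: y :: t, _ =>
    have hx : x = 0 := by simpa using hhead
    subst hx
    have hlast' : (0 :: y :: t).getLast (by simp) = n + 1 := by
      rw [List.getLast?_eq_getLast (by simp)] at hlast
      exact Option.some_injective _ hlast.symm |>.symm
    rw [wt_eq 0 y t (n+1) _ hchain hlast' ?hT]
    · rw [show n + 1 - (0 + 1) = n by omega]
      apply seg_eq_Efn
      exact Finset.inter_subset_right
    case hT =>
      intro i h1 h2
      simp only [Finset.mem_inter, List.mem_toFinset, Finset.mem_Icc]
      constructor
      · exact fun h => h.1
      · intro h
        exact ⟨h, by omega, by omega⟩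

/-! counting chains -/

section Counting

variable {P : Type*} [Fintype P] [PartialOrder P] [BoundedOrder P] {ρ : P → ℕ} {n : ℕ}

omit [Fintype P] [BoundedOrder P] in
lemma chain_rho_injOn (hstrict : ∀ x y : P, x < y → ρ x < ρ y)
    {s : Set P} (hc : IsChain (· ≤ ·) s) : Set.InjOn ρ s := by
  intro x hx y hy hxy
  by_contra hne
  rcases hc hx hy hne with h | h
  · exact absurd hxy (ne_of_lt (hstrict x y (lt_of_le_of_ne h hne)))
  · exact absurd hxy.symm (ne_of_lt (hstrict y x (lt_of_le_of_ne h (Ne.symm hne))))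

lemma k_eq_card (hbot : ρ ⊥ = 0) (htop : ρ ⊤ = n + 1)
    (hstrict : ∀ x y : P, x < y → ρ x < ρ y) {k : ℕ} (f : Fin (k+1) → P)
    (hf : StrictMono f) (h0 : f 0 = ⊥) (hl : f (Fin.last k) = ⊤) :
    k = ((Finset.univ.image fun i => ρ (f i)) ∩ Finset.Icc 1 n).card + 1 := by
  set S := Finset.univ.image fun i => ρ (f i) with hS
  have hmono : StrictMono fun i => ρ (f i) := fun i j h => hstrict _ _ (hf h)
  have hinj : Function.Injective fun i => ρ (f i) := hmono.injective
  have hcardS : S.card = k + 1 := by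
    rw [hS, Finset.card_image_of_injective _ hinj, Finset.card_univ, Fintype.card_fin]
  have h0S : (0:ℕ) ∈ S := by
    rw [hS]
    exact Finset.mem_image.mpr ⟨0, Finset.mem_univ _, by rw [h0, hbot]⟩
  have hnS : (n+1) ∈ S := by
    rw [hS]
    exact Finset.mem_image.mpr ⟨Fin.last k, Finset.mem_univ _, by rw [hl, htop]⟩
  have hbound : ∀ x ∈ S, x ≤ n + 1 := by
    intro x hx
    rcases Finset.mem_image.mp hx with ⟨i, _, rfl⟩
    show ρ (f i) ≤ n + 1
    rcases eq_or_lt_of_le (hf.monotone (Fin.le_last i)) with h | h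
    · rw [h, hl, htop]
    · rw [hl] at h
      have := hstrict _ _ h
      rw [htop] at this
      omega
  have hTm : S ∩ Finset.Icc 1 n = (S.erase 0).erase (n+1) := by
    ext x
    simp only [Finset.mem_inter, Finset.mem_Icc, Finset.mem_erase]
    constructor
    · intro ⟨h1, h2⟩
      exact ⟨by omega, by omega, h1⟩
    · intro ⟨h1, h2, h3⟩
      have := hbound x h3
      exact ⟨h3, by omega, by omega⟩
  have hk0 : k ≠ 0 := by
    intro hk
    subst hk
    have h01 : (0 : Fin 1) = Fin.last 0 := rfl
    rw [h01, hl] at h0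
    have := congrArg ρ h0
    rw [hbot, htop] at this
    omega
  rw [hTm, Finset.card_erase_of_mem (Finset.mem_erase.mpr ⟨by omega, hnS⟩),
    Finset.card_erase_of_mem h0S, hcardS]
  omega

lemma count_chains (hbot : ρ ⊥ = 0) (htop : ρ ⊤ = n + 1)
    (hstrict : ∀ x y : P, x < y → ρ x < ρ y) (T : Finset ℕ) (hT : T ⊆ Finset.Icc 1 n) :
    (Finset.univ.filter fun f : Fin (T.card + 1 + 1) → P =>
        (StrictMono f ∧ f 0 = ⊥ ∧ f (Fin.last (T.card + 1)) = ⊤) ∧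
        (Finset.univ.image fun i => ρ (f i)) ∩ Finset.Icc 1 n = T).card
    = (Finset.univ.filter fun c : Finset P =>
        IsChain (· ≤ ·) (↑c : Set P) ∧ c.image ρ = T).card := by
  have hbottop : (⊥ : P) ≠ ⊤ := by
    intro h
    have := congrArg ρ h
    rw [hbot, htop] at this
    omega
  apply Finset.card_nbij (fun f => (Finset.univ.image f) \ {⊥, ⊤})
  · -- maps to
    intro f hf
    simp only [Finset.mem_coe, Finset.mem_filter, Finset.mem_univ, true_and] at hf ⊢
    obtain ⟨⟨hmono, h0, hl⟩, hTf⟩ := hf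
    constructor
    · -- is a chain
      intro x hx y hy hne
      simp only [Finset.coe_sdiff, Set.mem_diff, Finset.coe_image, Set.mem_image] at hx hy
      obtain ⟨⟨i, _, rfl⟩, _⟩ := hx
      obtain ⟨⟨j, _, rfl⟩, _⟩ := hy
      rcases le_total i j with h | h
      · exact Or.inl (hmono.monotone h)
      · exact Or.inr (hmono.monotone h)
    · -- image is T
      ext x
      simp only [Finset.mem_image, Finset.mem_sdiff, Finset.mem_insert, Finset.mem_singleton,
        Finset.mem_univ, true_and]
      constructor
      · rintro ⟨p, ⟨⟨i, rfl⟩, hp⟩, rfl⟩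
        push_neg at hp
        have hi0 : i ≠ 0 := fun h => hp.1 (h ▸ h0)
        have hil : i ≠ Fin.last _ := fun h => hp.2 (h ▸ hl)
        have h1 : (0 : Fin _) < i := Fin.pos_of_ne_zero hi0
        have h2 : i < Fin.last _ := lt_of_le_of_ne (Fin.le_last i) hil
        have hlow := hstrict _ _ (hmono h1)
        have hhigh := hstrict _ _ (hmono h2)
        rw [h0, hbot] at hlow
        rw [hl, htop] at hhigh
        rw [← hTf]
        simp only [Finset.mem_inter, Finset.mem_image, Finset.mem_univ, true_and,
          Finset.mem_Icc]
        exact ⟨⟨i, rfl⟩, by omega, by omega⟩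
      · intro hx
        have hx' := hx
        rw [← hTf] at hx'
        simp only [Finset.mem_inter, Finset.mem_image, Finset.mem_univ, true_and,
          Finset.mem_Icc] at hx'
        obtain ⟨⟨i, rfl⟩, hge, hle⟩ := hx'
        refine ⟨f i, ⟨⟨i, rfl⟩, ?_⟩, rfl⟩
        push_neg
        refine ⟨fun h => ?_, fun h => ?_⟩
        · have := congrArg ρ h
          rw [hbot] at this
          omega
        · have := congrArg ρ h
          rw [htop] at this
          omega
  · -- injective
    intro f hf g hg hfg
    simp only [Finset.mem_coe, Finset.mem_filter, Finset.mem_univ, true_and] at hf hg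
    obtain ⟨⟨hfm, hf0, hfl⟩, hTf⟩ := hf
    obtain ⟨⟨hgm, hg0, hgl⟩, hTg⟩ := hg
    have hbt : ∀ h : Fin (T.card + 1 + 1) → P, h 0 = ⊥ → h (Fin.last _) = ⊤ →
        Finset.univ.image h = (Finset.univ.image h \ {⊥, ⊤}) ∪ {⊥, ⊤} := by
      intro h h0 hl
      rw [Finset.sdiff_union_of_subset]
      intro x hx
      simp only [Finset.mem_insert, Finset.mem_singleton] at hx
      rcases hx with rfl | rfl
      · exact Finset.mem_image.mpr ⟨0, Finset.mem_univ _, h0⟩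
      · exact Finset.mem_image.mpr ⟨Fin.last _, Finset.mem_univ _, hl⟩
    have hfg' : Finset.univ.image f \ {⊥, ⊤} = Finset.univ.image g \ {⊥, ⊤} := hfg
    have himg : Finset.univ.image f = Finset.univ.image g := by
      rw [hbt f hf0 hfl, hbt g hg0 hgl, hfg']
    have hchain : IsChain (· ≤ ·) (↑(Finset.univ.image f) : Set P) := by
      intro x hx y hy hne
      simp only [Finset.coe_image, Set.mem_image] at hx hy
      obtain ⟨i, _, rfl⟩ := hx
      obtain ⟨j, _, rfl⟩ := hy
      rcases le_total i j with h | h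
      · exact Or.inl (hfm.monotone h)
      · exact Or.inr (hfm.monotone h)
    have hrinj := chain_rho_injOn (ρ := ρ) hstrict hchain
    have hrf : StrictMono fun i => ρ (f i) := fun i j h => hstrict _ _ (hfm h)
    have hrg : StrictMono fun i => ρ (g i) := fun i j h => hstrict _ _ (hgm h)
    have hrange : Set.range (fun i => ρ (f i)) = Set.range (fun i => ρ (g i)) := by
      have hr : ∀ h : Fin (T.card+1+1) → P,
          Set.range (fun i => ρ (h i)) = ρ '' ↑(Finset.univ.image h) := by
        intro h
        ext x
        simp
      rw [hr f, hr g, himg]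
    haveI : WellFoundedLT (Fin (T.card+1+1)) := Finite.to_wellFoundedLT
    have heq : (fun i => ρ (f i)) = (fun i => ρ (g i)) := (hrf.range_inj hrg).mp hrange
    funext i
    have hfi : f i ∈ (↑(Finset.univ.image f) : Set P) := by
      simp only [Finset.coe_image, Set.mem_image]
      exact ⟨i, Finset.mem_coe.mpr (Finset.mem_univ _), rfl⟩
    have hgi : g i ∈ (↑(Finset.univ.image f) : Set P) := by
      rw [himg]
      simp only [Finset.coe_image, Set.mem_image]
      exact ⟨i, Finset.mem_coe.mpr (Finset.mem_univ _), rfl⟩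
    exact hrinj hfi hgi (congrFun heq i)
  · -- surjective
    intro c hc
    simp only [Finset.mem_coe, Finset.mem_filter, Finset.mem_univ, true_and] at hc
    obtain ⟨hchain, hcT⟩ := hc
    have hbotc : (⊥ : P) ∉ c := by
      intro h
      have h0T : (0:ℕ) ∈ T := hcT ▸ Finset.mem_image.mpr ⟨⊥, h, hbot⟩
      have := hT h0T
      simp [Finset.mem_Icc] at this
    have htopc : (⊤ : P) ∉ c := by
      intro h
      have hnT : (n+1:ℕ) ∈ T := hcT ▸ Finset.mem_image.mpr ⟨⊤, h, htop⟩
      have := hT hnT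
      simp only [Finset.mem_Icc] at this
      omega
    set c' : Finset P := insert ⊥ (insert ⊤ c) with hc'
    have hchain' : IsChain (· ≤ ·) (↑c' : Set P) := by
      intro x hx y hy hne
      simp only [hc', Finset.coe_insert, Set.mem_insert_iff, Finset.mem_coe] at hx hy
      rcases hx with rfl | rfl | hx
      · exact Or.inl bot_le
      · exact Or.inr le_top
      · rcases hy with rfl | rfl | hy
        · exact Or.inr bot_le
        · exact Or.inl le_top
        · exact hchain hx hy hne
    have hinjOn := chain_rho_injOn hstrict hchain'
    have hcard : c.card = T.card := by
      rw [← hcT]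
      exact (Finset.card_image_of_injOn (chain_rho_injOn hstrict hchain)).symm
    have hbotc2 : (⊥ : P) ∉ insert ⊤ c := by
      simp only [Finset.mem_insert]
      push_neg
      exact ⟨hbottop, hbotc⟩
    have hcc' : c'.card = T.card + 1 + 1 := by
      rw [hc', Finset.card_insert_of_notMem hbotc2, Finset.card_insert_of_notMem htopc, hcard]
    have hR : c'.image ρ = insert 0 (insert (n+1) T) := by
      rw [hc', Finset.image_insert, Finset.image_insert, hbot, htop, hcT]
    set R := c'.image ρ with hRdef
    have h0R : (0:ℕ) ∈ R := by rw [hR]; simp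
    have hnR : (n+1:ℕ) ∈ R := by rw [hR]; simp
    have hboundR : ∀ x ∈ R, x ≤ n+1 := by
      intro x hx
      rw [hR] at hx
      simp only [Finset.mem_insert] at hx
      rcases hx with rfl | rfl | hx
      · omega
      · omega
      · have := hT hx
        simp only [Finset.mem_Icc] at this
        omega
    have hcardR : R.card = T.card + 1 + 1 := by
      rw [hRdef, Finset.card_image_of_injOn hinjOn, hcc']
    have hex : ∀ i : Fin (T.card + 1 + 1), ∃! x, x ∈ c' ∧ ρ x = R.orderEmbOfFin hcardR i := by
      intro i
      have hmem : R.orderEmbOfFin hcardR i ∈ R := Finset.orderEmbOfFin_mem R hcardR i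
      obtain ⟨x, hx, hxe⟩ := Finset.mem_image.mp
        (show R.orderEmbOfFin hcardR i ∈ c'.image ρ from hmem)
      refine ⟨x, ⟨hx, hxe⟩, ?_⟩
      intro y ⟨hy, hye⟩
      exact hinjOn (Finset.mem_coe.mpr hy) (Finset.mem_coe.mpr hx) (by rw [hye, hxe])
    set f : Fin (T.card + 1 + 1) → P :=
      fun i => Finset.choose (fun x => ρ x = R.orderEmbOfFin hcardR i) c' (hex i) with hf
    have hfc' : ∀ i, f i ∈ c' := fun i => Finset.choose_mem _ _ _
    have hfρ : ∀ i, ρ (f i) = R.orderEmbOfFin hcardR i :=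
      fun i => Finset.choose_property (fun x => ρ x = R.orderEmbOfFin hcardR i) c' (hex i)
    have hfmono : StrictMono f := by
      intro i j hij
      have hρlt : ρ (f i) < ρ (f j) := by
        rw [hfρ, hfρ]
        exact (R.orderEmbOfFin hcardR).strictMono hij
      have hne : f i ≠ f j := fun h => absurd (congrArg ρ h) (ne_of_lt hρlt)
      rcases hchain' (Finset.mem_coe.mpr (hfc' i)) (Finset.mem_coe.mpr (hfc' j)) hne with h | h
      · exact lt_of_le_of_ne h hne
      · exact absurd (hstrict _ _ (lt_of_le_of_ne h hne.symm)) (by omega)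
    have hmin : R.min' ⟨0, h0R⟩ = 0 :=
      le_antisymm (Finset.min'_le R 0 h0R) (Nat.zero_le _)
    have hmax : R.max' ⟨n+1, hnR⟩ = n+1 :=
      le_antisymm (Finset.max'_le _ _ _ hboundR) (Finset.le_max' R _ hnR)
    have hf0 : f 0 = ⊥ := by
      apply hinjOn (Finset.mem_coe.mpr (hfc' 0)) (Finset.mem_coe.mpr (by simp [hc']))
      rw [hfρ, hbot]
      have := Finset.orderEmbOfFin_zero hcardR (by omega)
      rw [show (0 : Fin (T.card + 1 + 1)) = ⟨0, by omega⟩ from rfl, this, hmin]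
    have hfl : f (Fin.last (T.card + 1)) = ⊤ := by
      apply hinjOn (Finset.mem_coe.mpr (hfc' _)) (Finset.mem_coe.mpr (by simp [hc']))
      rw [hfρ, htop]
      have := Finset.orderEmbOfFin_last hcardR (by omega)
      rw [show Fin.last (T.card + 1) = ⟨T.card + 1 + 1 - 1, by omega⟩ from rfl, this, hmax]
    have hfinj : Function.Injective f := hfmono.injective
    have himg : Finset.univ.image f = c' := by
      apply Finset.eq_of_subset_of_card_le
      · intro x hx
        obtain ⟨i, _, rfl⟩ := Finset.mem_image.mp hx
        exact hfc' i
      · rw [Finset.card_image_of_injective _ hfinj, Finset.card_univ, Fintype.card_fin, hcc']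
    have hTmid : (Finset.univ.image fun i => ρ (f i)) ∩ Finset.Icc 1 n = T := by
      have himg2 : (Finset.univ.image fun i => ρ (f i)) = R := by
        rw [hRdef, ← himg, Finset.image_image]
        rfl
      rw [himg2, hR]
      ext x
      simp only [Finset.mem_inter, Finset.mem_insert, Finset.mem_Icc]
      constructor
      · rintro ⟨rfl | rfl | hx, h1, h2⟩
        · omega
        · omega
        · exact hx
      · intro hx
        have := hT hx
        simp only [Finset.mem_Icc] at this
        exact ⟨Or.inr (Or.inr hx), this⟩
    refine ⟨f, ?_, ?_⟩
    · simp only [Finset.mem_coe, Finset.mem_filter, Finset.mem_univ, true_and]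
      exact ⟨⟨hfmono, hf0, hfl⟩, hTmid⟩
    · show Finset.univ.image f \ {⊥, ⊤} = c
      rw [himg, hc']
      ext x
      simp only [Finset.mem_sdiff, Finset.mem_insert, Finset.mem_singleton]
      constructor
      · intro ⟨h1, h2⟩
        push_neg at h2
        rcases h1 with rfl | rfl | h
        · exact absurd rfl h2.1
        · exact absurd rfl h2.2
        · exact h
      · intro hx
        refine ⟨Or.inr (Or.inr hx), ?_⟩
        push_neg
        exact ⟨fun h => hbotc (h ▸ hx), fun h => htopc (h ▸ hx)⟩

end Counting

lemma powerset_swap {A : Finset ℕ} {M : Type*} [AddCommMonoid M]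
    (g : Finset ℕ → Finset ℕ → M) :
    ∑ S ∈ A.powerset, ∑ T ∈ S.powerset, g S T
      = ∑ T ∈ A.powerset, ∑ S ∈ A.powerset.filter (T ⊆ ·), g S T := by
  classical
  have h : ∀ S ∈ A.powerset, S.powerset = A.powerset.filter (· ⊆ S) := by
    intro S hS
    rw [Finset.mem_powerset] at hS
    ext T
    simp only [Finset.mem_powerset, Finset.mem_filter]
    exact ⟨fun h => ⟨h.trans hS, h⟩, fun h => h.2⟩
  rw [Finset.sum_congr rfl fun S hS => by rw [h S hS, Finset.sum_filter]]
  rw [Finset.sum_comm]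
  exact Finset.sum_congr rfl fun T hT => (Finset.sum_filter _ _).symm


/-- The `ab`-index of a graded poset equals the sum of the weights of all chains
`0̂ = x_0 < x_1 < ⋯ < x_k = 1̂`. -/
theorem Psi_eq_sum_wt (n : ℕ) (P : Type*) [Fintype P] [PartialOrder P]
    [BoundedOrder P] (ρ : P → ℕ)
    (hbot : ρ ⊥ = 0) (htop : ρ ⊤ = n + 1)
    (hstrict : ∀ x y : P, x < y → ρ x < ρ y)
    (hcov : ∀ x y : P, x ⋖ y → ρ y = ρ x + 1) :
    Psi P ρ n =
      ∑ k ∈ Finset.Icc 1 (n + 1),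
        ∑ f ∈ Finset.univ.filter
            (fun f : Fin (k + 1) → P => StrictMono f ∧ f 0 = ⊥ ∧ f (Fin.last k) = ⊤),
          wt (List.ofFn fun i => ρ (f i)) := by
  classical
  have hflag : ∀ T : Finset ℕ, flagF P ρ T =
      ((Finset.univ.filter fun c : Finset P =>
        IsChain (· ≤ ·) (↑c : Set P) ∧ c.image ρ = T)).card := by
    intro T
    unfold flagF
    rw [show {c : Finset P | IsChain (· ≤ ·) (↑c : Set P) ∧ c.image ρ = T}
        = ↑(Finset.univ.filter fun c : Finset P =>
            IsChain (· ≤ ·) (↑c : Set P) ∧ c.image ρ = T) by ext c; simp]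
    rw [Set.ncard_coe_finset]
  -- LHS
  have hLHS : Psi P ρ n = ∑ T ∈ (Finset.Icc 1 n).powerset, flagF P ρ T • Efn n T := by
    unfold Psi flagH
    have hpush : ∀ S ∈ (Finset.Icc 1 n).powerset,
        MonoidAlgebra.single (word n S)
            (∑ T ∈ S.powerset, (-1:ℤ) ^ (S.card - T.card) * flagF P ρ T)
          = ∑ T ∈ S.powerset, MonoidAlgebra.single (word n S)
            ((-1:ℤ) ^ (S.card - T.card) * flagF P ρ T) :=
      fun S _ => map_sum (MonoidAlgebra.singleAddHom (word n S)) _ _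
    rw [Finset.sum_congr rfl hpush, powerset_swap (fun S T => MonoidAlgebra.single (word n S)
      ((-1:ℤ) ^ (S.card - T.card) * flagF P ρ T))]
    refine Finset.sum_congr rfl fun T hT => ?_
    rw [Efn_eq_filter n T (Finset.mem_powerset.mp hT), Finset.smul_sum]
    refine Finset.sum_congr rfl fun S hS => ?_
    show MonoidAlgebra.single (word n S) _ = _
    rw [MonoidAlgebra.smul_single, smul_eq_mul, mul_comm]
  rw [hLHS]
  -- RHS: rewrite each weight
  have hwt : ∀ k ∈ Finset.Icc 1 (n+1), ∀ f ∈ Finset.univ.filter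
      (fun f : Fin (k + 1) → P => StrictMono f ∧ f 0 = ⊥ ∧ f (Fin.last k) = ⊤),
      wt (List.ofFn fun i => ρ (f i))
        = Efn n ((Finset.univ.image fun i => ρ (f i)) ∩ Finset.Icc 1 n) := by
    intro k hk f hf
    simp only [Finset.mem_filter, Finset.mem_univ, true_and] at hf
    obtain ⟨hmono, hf0, hfl⟩ := hf
    simp only [Finset.mem_Icc] at hk
    have hlen : 2 ≤ (List.ofFn fun i => ρ (f i)).length := by
      rw [List.length_ofFn]
      omega
    have hch : (List.ofFn fun i => ρ (f i)).Chain' (· < ·) :=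
      List.isChain_iff_pairwise.mpr (List.pairwise_ofFn.mpr fun i j h => hstrict _ _ (hmono h))
    have hhd : (List.ofFn fun i => ρ (f i)).head? = some 0 := by
      rw [List.ofFn_succ]
      simp [hf0, hbot]
    have hlst : (List.ofFn fun i => ρ (f i)).getLast? = some (n+1) := by
      rw [List.getLast?_eq_getLast (by simp), List.getLast_ofFn_succ]
      rw [hfl, htop]
    have htf : (List.ofFn fun i => ρ (f i)).toFinset
        = Finset.univ.image fun i => ρ (f i) := by
      ext x
      rw [List.mem_toFinset, List.mem_ofFn]
      simp [eq_comm]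
    rw [wt_chain n _ hlen hch hhd hlst, htf]
  rw [Finset.sum_congr rfl fun k hk => Finset.sum_congr rfl fun f hf => hwt k hk f hf]
  -- fiberwise decomposition
  have hmaps : ∀ k, ∀ f ∈ Finset.univ.filter
      (fun f : Fin (k + 1) → P => StrictMono f ∧ f 0 = ⊥ ∧ f (Fin.last k) = ⊤),
      (Finset.univ.image fun i => ρ (f i)) ∩ Finset.Icc 1 n
        ∈ (Finset.Icc 1 n).powerset :=
    fun k f _ => Finset.mem_powerset.mpr Finset.inter_subset_right
  rw [Finset.sum_congr rfl fun k hk =>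
    (Finset.sum_fiberwise_of_maps_to (hmaps k) _).symm]
  rw [Finset.sum_comm]
  refine Finset.sum_congr rfl fun T hT => ?_
  have hTsub : T ⊆ Finset.Icc 1 n := Finset.mem_powerset.mp hT
  -- replace the inner summand with the constant Efn n T, then count
  have hconst : ∀ k ∈ Finset.Icc 1 (n+1),
      (∑ f ∈ (Finset.univ.filter
        (fun f : Fin (k + 1) → P => StrictMono f ∧ f 0 = ⊥ ∧ f (Fin.last k) = ⊤)).filter
          (fun f => (Finset.univ.image fun i => ρ (f i)) ∩ Finset.Icc 1 n = T),
        Efn n ((Finset.univ.image fun i => ρ (f i)) ∩ Finset.Icc 1 n))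
      = (Finset.univ.filter
        (fun f : Fin (k + 1) → P => (StrictMono f ∧ f 0 = ⊥ ∧ f (Fin.last k) = ⊤) ∧
          (Finset.univ.image fun i => ρ (f i)) ∩ Finset.Icc 1 n = T)).card • Efn n T := by
    intro k hk
    rw [Finset.filter_filter]
    have hcg : ∀ f ∈ Finset.univ.filter
        (fun f : Fin (k + 1) → P => (StrictMono f ∧ f 0 = ⊥ ∧ f (Fin.last k) = ⊤) ∧
          (Finset.univ.image fun i => ρ (f i)) ∩ Finset.Icc 1 n = T),
        Efn n ((Finset.univ.image fun i => ρ (f i)) ∩ Finset.Icc 1 n) = Efn n T := by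
      intro f hf
      rw [(Finset.mem_filter.mp hf).2.2]
    rw [Finset.sum_congr rfl hcg, Finset.sum_const]
  rw [Finset.sum_congr rfl hconst]
  -- only k = T.card + 1 contributes
  have hzero : ∀ k ∈ Finset.Icc 1 (n+1), k ≠ T.card + 1 →
      (Finset.univ.filter
        (fun f : Fin (k + 1) → P => (StrictMono f ∧ f 0 = ⊥ ∧ f (Fin.last k) = ⊤) ∧
          (Finset.univ.image fun i => ρ (f i)) ∩ Finset.Icc 1 n = T)).card • Efn n T
        = 0 := by
    intro k hk hne
    have hempty : (Finset.univ.filter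
        (fun f : Fin (k + 1) → P => (StrictMono f ∧ f 0 = ⊥ ∧ f (Fin.last k) = ⊤) ∧
          (Finset.univ.image fun i => ρ (f i)) ∩ Finset.Icc 1 n = T)) = ∅ := by
      apply Finset.eq_empty_of_forall_notMem
      intro f hf
      simp only [Finset.mem_filter, Finset.mem_univ, true_and] at hf
      obtain ⟨⟨hmono, hf0, hfl⟩, hTf⟩ := hf
      exact hne (by rw [k_eq_card hbot htop hstrict f hmono hf0 hfl, hTf])
    rw [hempty]
    simp
  have hmem : T.card + 1 ∈ Finset.Icc 1 (n+1) := by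
    simp only [Finset.mem_Icc]
    have := Finset.card_le_card hTsub
    rw [Nat.card_Icc] at this
    omega
  rw [Finset.sum_eq_single_of_mem (T.card + 1) hmem (fun k hk hne => hzero k hk hne)]
  -- the bijection with chains
  rw [count_chains hbot htop hstrict T hTsub, hflag]
  rw [natCast_zsmul]
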